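/- arXiv:1208.3453 — 8 statements merged into one kernel-verified Lean document; each statement's English description precedes it below -/
import Mathlib

section
/- Let N be a positive integer, e a positive divisor of N, k an integer, and f a modular form of weight k for Γ₀(N). Set h = N / gcd(e², N) and define g = Σ_{j=0}^{h−1} f ∣[k] (U_e·T^j). Then for every matrix δ = [[a,b],[c,d]] ∈ Γ₀(N) satisfying a ≡ d (mod gcd(e, N/e)), one has g ∣[k] δ = g. -/
open ModularForm UpperHalfPlane Matrix CongruenceSubgroup
open scoped MatrixGroups ModularForm

/-- The matrix `U_e = [[1,0],[e,1]]` in `SL(2, ℤ)`. -/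
def Ue (e : ℤ) : SL(2, ℤ) :=
  ⟨!![1, 0; e, 1], by norm_num [Matrix.det_fin_two_of]⟩

lemma Ue_mul_Ue (e : ℤ) : Ue e * Ue (-e) = 1 := by
  ext i j
  change ((Ue e : Matrix (Fin 2) (Fin 2) ℤ) * (Ue (-e) : Matrix (Fin 2) (Fin 2) ℤ)) i j
    = (1 : Matrix (Fin 2) (Fin 2) ℤ) i j
  fin_cases i <;> fin_cases j <;> simp [Ue, Matrix.mul_apply, Fin.sum_univ_two]

lemma Ue_inv (e : ℤ) : (Ue e)⁻¹ = Ue (-e) :=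
  inv_eq_of_mul_eq_one_right (Ue_mul_Ue e)

lemma Ue_coe (e : ℤ) : (Ue e : Matrix (Fin 2) (Fin 2) ℤ) = !![1, 0; e, 1] := rfl

lemma sum_slash {ι : Type*} (s : Finset ι) (F : ι → (ℍ → ℂ)) (k : ℤ) (γ : SL(2, ℤ)) :
    (∑ i ∈ s, F i) ∣[k] γ = ∑ i ∈ s, (F i) ∣[k] γ := by
  exact SlashAction.sum_slash k γ

lemma coe_T_pow (j : ℕ) : ((ModularGroup.T ^ j : SL(2, ℤ)) : Matrix (Fin 2) (Fin 2) ℤ)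
    = !![1, (j : ℤ); 0, 1] := by
  rw [← zpow_natCast, ModularGroup.coe_T_zpow]

/-- Let `N` be a positive integer, `e` a positive divisor of `N`, `k` an integer, and `f` a
modular form of weight `k` for `Γ₀(N)`.  Set `h = N / gcd(e², N)` and
`g = ∑_{j=0}^{h-1} f ∣[k] (U_e T^j)`.  Then for every `δ = [[a,b],[c,d]] ∈ Γ₀(N)` with
`a ≡ d (mod gcd(e, N/e))` we have `g ∣[k] δ = g`. -/
theorem stmt_0 (N : ℕ) (hN : 0 < N) (e : ℕ) (he : 0 < e) (heN : e ∣ N) (k : ℤ)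
    (f : ModularForm (Gamma0 N) k) (g : ℍ → ℂ)
    (hg : g = ∑ j ∈ Finset.range (N / Nat.gcd (e ^ 2) N),
      (⇑f) ∣[k] (Ue (e : ℤ) * ModularGroup.T ^ j))
    (δ : SL(2, ℤ)) (hδ : δ ∈ Gamma0 N)
    (had : ((δ : Matrix (Fin 2) (Fin 2) ℤ) 0 0)
      ≡ ((δ : Matrix (Fin 2) (Fin 2) ℤ) 1 1) [ZMOD (Nat.gcd e (N / e))]) :
    g ∣[k] δ = g := by
  classical
  set h := N / Nat.gcd (e ^ 2) N with hh
  set M := N / e with hMdef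
  set g0 := Nat.gcd e M with hg0def
  -- basic natural-number facts
  have heM : e * M = N := Nat.mul_div_cancel' heN
  have hg0e : g0 ∣ e := Nat.gcd_dvd_left _ _
  have hg0M : g0 ∣ M := Nat.gcd_dvd_right _ _
  have hg0pos : 0 < g0 := Nat.gcd_pos_of_pos_left _ he
  have hgcd : Nat.gcd (e ^ 2) N = e * g0 := by
    rw [← heM, pow_two, Nat.gcd_mul_left]
  have hhM : h = M / g0 := by
    rw [hh, hgcd, ← heM, Nat.mul_div_mul_left _ _ he]
  have hg0h : g0 * h = M := by rw [hhM]; exact Nat.mul_div_cancel' hg0M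
  have hN' : N = e * g0 * h := by rw [mul_assoc, hg0h, heM]
  have hhpos : 0 < h := by
    rw [hh]
    exact Nat.div_pos (Nat.le_of_dvd hN (Nat.gcd_dvd_right _ _)) (Nat.gcd_pos_of_pos_right _ hN)
  haveI : NeZero h := ⟨hhpos.ne'⟩
  set u := e / g0 with hudef
  have hug : g0 * u = e := Nat.mul_div_cancel' hg0e
  have hcop : Nat.Coprime u h := by
    rw [hudef, hhM]
    exact Nat.coprime_div_gcd_div_gcd hg0pos
  -- entries of δ
  set a := (δ : Matrix (Fin 2) (Fin 2) ℤ) 0 0 with ha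
  set b := (δ : Matrix (Fin 2) (Fin 2) ℤ) 0 1 with hb
  set c := (δ : Matrix (Fin 2) (Fin 2) ℤ) 1 0 with hc
  set d := (δ : Matrix (Fin 2) (Fin 2) ℤ) 1 1 with hd
  have hdet : a * d - b * c = 1 := by
    have h2 := δ.2
    rw [Matrix.det_fin_two] at h2
    rw [ha, hb, hc, hd]
    exact h2
  have hNc : (N : ℤ) ∣ c := by
    have h2 := Gamma0_mem.mp hδ
    rw [← ZMod.intCast_zmod_eq_zero_iff_dvd]
    exact h2
  have hgad : (g0 : ℤ) ∣ (a - d) := by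
    have h2 := had.dvd
    rw [← neg_sub] at h2
    exact (dvd_neg.mp h2)
  obtain ⟨t, ht⟩ := hgad
  -- ZMod h facts
  have hhN : h ∣ N := Dvd.intro_left _ hN'.symm
  have hch : ((c : ZMod h)) = 0 := by
    rw [ZMod.intCast_zmod_eq_zero_iff_dvd]
    exact dvd_trans (Int.natCast_dvd_natCast.mpr hhN) hNc
  have hADh : ((a : ZMod h)) * ((d : ZMod h)) = 1 := by
    have h2 : ((a * d - b * c : ℤ) : ZMod h) = ((1 : ℤ) : ZMod h) := by rw [hdet]
    push_cast at h2
    linear_combination h2 + (b : ZMod h) * hch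
  set U : (ZMod h)ˣ := ZMod.unitOfCoprime u hcop with hUdef
  have hu : (U : ZMod h) = ((u : ℕ) : ZMod h) := ZMod.coe_unitOfCoprime u hcop
  set W : ZMod h := ((U⁻¹ : (ZMod h)ˣ) : ZMod h) with hWdef
  have huW : ((u : ℕ) : ZMod h) * W = 1 := by
    rw [← hu, hWdef]
    exact_mod_cast U.mul_inv
  set R : ZMod h := (d : ZMod h) * W * (((u : ℕ) : ZMod h) * (b : ZMod h) - ((t : ℤ) : ZMod h))
    with hR
  -- the key term-by-term identity
  have key : ∀ j : ℕ, (⇑f ∣[k] (Ue (e : ℤ) * ModularGroup.T ^ j)) ∣[k] δ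
      = ⇑f ∣[k] (Ue (e : ℤ) * ModularGroup.T ^
          (((d : ZMod h) * (d : ZMod h) * ((j : ℕ) : ZMod h) + R).val)) := by
    intro j
    set j' : ℕ := ((d : ZMod h) * (d : ZMod h) * ((j : ℕ) : ZMod h) + R).val with hj'def
    have hj'cast : ((j' : ℕ) : ZMod h)
        = (d : ZMod h) * (d : ZMod h) * ((j : ℕ) : ZMod h) + R := by
      rw [hj'def]
      exact ZMod.natCast_rightInverse _
    have hmain : (h : ℤ) ∣ ((u : ℤ) * a * (j' : ℤ) - (u : ℤ) * d * (j : ℤ) - (u : ℤ) * b + t) := by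
      rw [← ZMod.intCast_zmod_eq_zero_iff_dvd]
      push_cast
      rw [hj'cast, hR]
      linear_combination (((u : ℕ) : ZMod h) * (d : ZMod h) * ((j : ℕ) : ZMod h)) * hADh
        + (((u : ℕ) : ZMod h) * (b : ZMod h) - ((t : ℤ) : ZMod h)) * ((u : ℕ) : ZMod h) * W * hADh
        + (((u : ℕ) : ZMod h) * (b : ZMod h) - ((t : ℤ) : ZMod h)) * huW
    set Γ : SL(2, ℤ) :=
      Ue (e : ℤ) * ModularGroup.T ^ j * δ * (Ue (e : ℤ) * ModularGroup.T ^ j')⁻¹ with hΓ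
    have hfac : Ue (e : ℤ) * ModularGroup.T ^ j * δ = Γ * (Ue (e : ℤ) * ModularGroup.T ^ j') := by
      rw [hΓ, inv_mul_cancel_right]
    have hmem : Γ ∈ Gamma0 N := by
      have hcoe : (Γ : Matrix (Fin 2) (Fin 2) ℤ) =
          !![1, 0; (e : ℤ), 1] * !![1, (j : ℤ); 0, 1] * !![a, b; c, d] *
            (!![1, -(j' : ℤ); 0, 1] * !![1, 0; -(e : ℤ), 1]) := by
        have hTinv : ((ModularGroup.T ^ j')⁻¹ : SL(2, ℤ)) = ModularGroup.T ^ (-(j' : ℤ)) := by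
          rw [← zpow_natCast ModularGroup.T j']
          exact (_root_.zpow_neg _ _).symm
        rw [hΓ, _root_.mul_inv_rev, Ue_inv, hTinv]
        simp only [Matrix.SpecialLinearGroup.coe_mul, coe_T_pow, ModularGroup.coe_T_zpow, Ue_coe]
        rw [Matrix.eta_fin_two (δ : Matrix (Fin 2) (Fin 2) ℤ), ← ha, ← hb, ← hc, ← hd]
      have hentry : (Γ : Matrix (Fin 2) (Fin 2) ℤ) 1 0
          = e * (a - d) - e ^ 2 * b - e ^ 2 * (j : ℤ) * d + e ^ 2 * (j' : ℤ) * a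
            + c * (e * (j : ℤ) + 1) * (1 + e * (j' : ℤ)) := by
        rw [hcoe]
        simp [Matrix.mul_fin_two]
        ring
      have hugZ : (g0 : ℤ) * (u : ℤ) = (e : ℤ) := by exact_mod_cast hug
      have hNL : (N : ℤ) ∣ (e * (a - d) - e ^ 2 * b - e ^ 2 * (j : ℤ) * d
          + e ^ 2 * (j' : ℤ) * a + c * (e * (j : ℤ) + 1) * (1 + e * (j' : ℤ))) := by
        have h1 : (N : ℤ) ∣ (e : ℤ) * (g0 : ℤ) *
            ((u : ℤ) * a * (j' : ℤ) - (u : ℤ) * d * (j : ℤ) - (u : ℤ) * b + t) := by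
          have hNcast : (N : ℤ) = (e : ℤ) * (g0 : ℤ) * (h : ℤ) := by exact_mod_cast hN'
          rw [hNcast]
          exact mul_dvd_mul_left _ hmain
        have h2 : (N : ℤ) ∣ c * ((e * (j : ℤ) + 1) * (1 + e * (j' : ℤ))) := hNc.mul_right _
        have hid : e * (a - d) - e ^ 2 * b - e ^ 2 * (j : ℤ) * d + e ^ 2 * (j' : ℤ) * a
            + c * (e * (j : ℤ) + 1) * (1 + e * (j' : ℤ))
            = (e : ℤ) * (g0 : ℤ) *
                ((u : ℤ) * a * (j' : ℤ) - (u : ℤ) * d * (j : ℤ) - (u : ℤ) * b + t)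
              + c * ((e * (j : ℤ) + 1) * (1 + e * (j' : ℤ))) := by
          linear_combination ((e : ℤ) * d * (j : ℤ) + e * b - e * a * (j' : ℤ)) * hugZ
            + (e : ℤ) * ht
        rw [hid]
        exact dvd_add h1 h2
      rw [Gamma0_mem]
      have : (((Γ : Matrix (Fin 2) (Fin 2) ℤ) 1 0 : ℤ) : ZMod N) = 0 := by
        rw [hentry, ZMod.intCast_zmod_eq_zero_iff_dvd]
        exact hNL
      exact this
    calc (⇑f ∣[k] (Ue (e : ℤ) * ModularGroup.T ^ j)) ∣[k] δ
        = ⇑f ∣[k] (Ue (e : ℤ) * ModularGroup.T ^ j * δ) :=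
          (SlashAction.slash_mul k _ δ (⇑f)).symm
      _ = ⇑f ∣[k] (Γ * (Ue (e : ℤ) * ModularGroup.T ^ j')) := by rw [hfac]
      _ = (⇑f ∣[k] Γ) ∣[k] (Ue (e : ℤ) * ModularGroup.T ^ j') :=
          SlashAction.slash_mul k Γ _ (⇑f)
      _ = ⇑f ∣[k] (Ue (e : ℤ) * ModularGroup.T ^ j') := by
          congr 1; exact SlashInvariantForm.slash_action_eqn f _ (Subgroup.mem_map_of_mem _ hmem)
  -- assemble
  calc g ∣[k] δ
      = ∑ j ∈ Finset.range h, (⇑f ∣[k] (Ue (e : ℤ) * ModularGroup.T ^ j)) ∣[k] δ := by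
        rw [hg]; exact sum_slash _ _ _ _
    _ = ∑ j ∈ Finset.range h, ⇑f ∣[k] (Ue (e : ℤ) * ModularGroup.T ^
          (((d : ZMod h) * (d : ZMod h) * ((j : ℕ) : ZMod h) + R).val)) :=
        Finset.sum_congr rfl (fun j _ => key j)
    _ = ∑ j ∈ Finset.range h, ⇑f ∣[k] (Ue (e : ℤ) * ModularGroup.T ^ j) := by
        refine Finset.sum_nbij'
          (fun n => ((d : ZMod h) * (d : ZMod h) * ((n : ℕ) : ZMod h) + R).val)
          (fun n => ((a : ZMod h) * (a : ZMod h) * (((n : ℕ) : ZMod h) - R)).val)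
          ?_ ?_ ?_ ?_ ?_
        · intro n _
          exact Finset.mem_range.mpr (ZMod.val_lt _)
        · intro n _
          exact Finset.mem_range.mpr (ZMod.val_lt _)
        · intro n hn
          simp only [ZMod.natCast_val, ZMod.cast_id]
          have h2 : (a : ZMod h) * (a : ZMod h) *
              ((d : ZMod h) * (d : ZMod h) * ((n : ℕ) : ZMod h) + R - R)
              = ((n : ℕ) : ZMod h) := by
            linear_combination ((a : ZMod h) * (d : ZMod h) * ((n : ℕ) : ZMod h)
              + ((n : ℕ) : ZMod h)) * hADh
          rw [h2, ZMod.val_cast_of_lt (Finset.mem_range.mp hn)]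
        · intro n hn
          simp only [ZMod.natCast_val, ZMod.cast_id]
          have h2 : (d : ZMod h) * (d : ZMod h) *
              ((a : ZMod h) * (a : ZMod h) * (((n : ℕ) : ZMod h) - R)) + R
              = ((n : ℕ) : ZMod h) := by
            linear_combination ((a : ZMod h) * (d : ZMod h) + 1) * (((n : ℕ) : ZMod h) - R) * hADh
          rw [h2, ZMod.val_cast_of_lt (Finset.mem_range.mp hn)]
        · intro n _
          rfl
    _ = g := hg.symm
end

section
/- Let N be a positive integer whose odd part is squarefree and whose even part divides 8 (i.e., N = 2^α·m with 0 ≤ α ≤ 3 and m odd and squarefree). Let e be a positive divisor of N, k an integer, and f a modular form of weight k for Γ₀(N). Set h = N / gcd(e², N) and define g = Σ_{j=0}^{h−1} f ∣[k] (U_e·T^j). Then g ∣[k] δ = g for every δ ∈ Γ₀(N). -/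
open ModularForm UpperHalfPlane Matrix CongruenceSubgroup
open scoped MatrixGroups ModularForm

lemma UeT_coe (e j : ℤ) :
    ((Ue e * ModularGroup.T ^ j : SL(2, ℤ)) : Matrix (Fin 2) (Fin 2) ℤ) = !![1, j; e, e * j + 1] := by
  rw [Matrix.SpecialLinearGroup.coe_mul, ModularGroup.coe_T_zpow]
  show !![1, 0; e, 1] * _ = _
  rw [Matrix.mul_fin_two]
  norm_num

lemma key_mem {N : ℕ} (e : ℕ) (heN : e ∣ N) {δ : SL(2, ℤ)} (hδ : δ ∈ Gamma0 N) (j j' : ℤ)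
    (hcong : (((N / e : ℕ)) : ℤ) ∣
      (e * (δ.1 0 0) * j' - e * (δ.1 1 1) * j - e * (δ.1 0 1) - δ.1 1 1 + δ.1 0 0)) :
    Ue e * ModularGroup.T ^ j * δ * (Ue e * ModularGroup.T ^ j')⁻¹ ∈ Gamma0 N := by
  have hc : (N : ℤ) ∣ δ.1 1 0 := (ZMod.intCast_zmod_eq_zero_iff_dvd _ _).mp (Gamma0_mem.mp hδ)
  obtain ⟨c₀, hc⟩ := hc
  obtain ⟨s, hs⟩ := hcong
  have hNe : (N : ℤ) = e * ((N / e : ℕ) : ℤ) := by exact_mod_cast (Nat.mul_div_cancel' heN).symm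
  rw [Gamma0_mem, ZMod.intCast_zmod_eq_zero_iff_dvd]
  have hcoe : ((Ue e * ModularGroup.T ^ j * δ * (Ue e * ModularGroup.T ^ j')⁻¹ : SL(2, ℤ)) :
      Matrix (Fin 2) (Fin 2) ℤ) =
      !![1, j; e, e * j + 1] * δ.1 * !![e * j' + 1, -j'; -e, 1] := by
    rw [Matrix.SpecialLinearGroup.coe_mul, Matrix.SpecialLinearGroup.coe_mul,
      Matrix.SpecialLinearGroup.coe_inv, UeT_coe, UeT_coe, Matrix.adjugate_fin_two]
    norm_num
  rw [hcoe, Matrix.eta_fin_two δ.1, Matrix.mul_fin_two, Matrix.mul_fin_two]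
  rw [show ∀ (a b c d : ℤ), (!![a, b; c, d] : Matrix (Fin 2) (Fin 2) ℤ) 1 0 = c
    from fun _ _ _ _ => rfl]
  exact ⟨s + c₀ * ((e * j + 1) * (e * j' + 1)), by linear_combination e * hs +
    ((e * j + 1) * (e * j' + 1)) * hc - s * hNe⟩

lemma sq_dvd_two {α m : ℕ} (hα : α ≤ 3) (hm : Odd m) (hsf : Squarefree m) (x : ℕ)
    (hx : x * x ∣ 2 ^ α * m) : x ∣ 2 := by
  have hm2 : ¬ (2 ∣ m) := by
    simpa [Nat.odd_iff, Nat.two_dvd_ne_zero] using hm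
  have hu : Nat.gcd x m = 1 := by
    have hdvd : Nat.gcd x m * Nat.gcd x m ∣ 2 ^ α * m :=
      dvd_trans (mul_dvd_mul (Nat.gcd_dvd_left x m) (Nat.gcd_dvd_left x m)) hx
    have hcop : Nat.Coprime (2 ^ α) (Nat.gcd x m * Nat.gcd x m) := by
      apply Nat.Coprime.pow_left
      apply Nat.Coprime.mul_right <;>
      · apply (Nat.Prime.coprime_iff_not_dvd Nat.prime_two).mpr
        intro h2; exact hm2 (h2.trans (Nat.gcd_dvd_right x m))
    exact Nat.isUnit_iff.mp (hsf _ (hcop.symm.dvd_of_dvd_mul_left hdvd))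
  have hxm : Nat.Coprime (x * x) m := Nat.Coprime.mul hu hu
  have hxx : x * x ∣ 2 ^ α := (Nat.Coprime.dvd_of_dvd_mul_right hxm hx)
  obtain ⟨β, hβ, rfl⟩ := (Nat.dvd_prime_pow Nat.prime_two).mp (dvd_trans (dvd_mul_right x x) hxx)
  have h2β : β + β ≤ α := by
    rw [← pow_add] at hxx
    exact (Nat.pow_dvd_pow_iff_le_right one_lt_two).mp hxx
  calc (2:ℕ) ^ β ∣ 2 ^ 1 := pow_dvd_pow 2 (by omega)
    _ = 2 := pow_one 2

lemma coprime_e1_h {α m N e : ℕ} (hα : α ≤ 3) (hm : Odd m) (hsf : Squarefree m)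
    (hNam : N = 2 ^ α * m) (heN : e ∣ N) :
    Nat.Coprime (e / Nat.gcd e (N / e)) ((N / e) / Nat.gcd e (N / e)) := by
  set n₁ := N / e with hn₁
  set G := Nat.gcd e n₁ with hG
  have hen : e * n₁ = N := Nat.mul_div_cancel' heN
  have hge : G ∣ e := Nat.gcd_dvd_left _ _
  have hgn : G ∣ n₁ := Nat.gcd_dvd_right _ _
  have he1 : e / G * G = e := Nat.div_mul_cancel hge
  have hh1 : n₁ / G * G = n₁ := Nat.div_mul_cancel hgn
  have hfact : (e / G) * (n₁ / G) * (G * G) = N := by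
    rw [show (e / G) * (n₁ / G) * (G * G) = (e / G * G) * (n₁ / G * G) by ring, he1, hh1, hen]
  rw [Nat.coprime_iff_gcd_eq_one]
  by_contra hne
  obtain ⟨p, hp, hpd⟩ := Nat.exists_prime_and_dvd hne
  have hpe : p ∣ e / G := hpd.trans (Nat.gcd_dvd_left _ _)
  have hph : p ∣ n₁ / G := hpd.trans (Nat.gcd_dvd_right _ _)
  have hppN : p * p ∣ N := by
    rw [← hfact]; exact dvd_mul_of_dvd_left (mul_dvd_mul hpe hph) _
  have hp2 : p = 2 := by
    have := sq_dvd_two hα hm hsf p (hNam ▸ hppN)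
    exact (Nat.prime_dvd_prime_iff_eq hp Nat.prime_two).mp this
  subst hp2
  have h2G : 2 ∣ G := Nat.dvd_gcd (hpe.trans (Nat.div_dvd_of_dvd hge))
    (hph.trans (Nat.div_dvd_of_dvd hgn))
  have h16 : (2:ℕ) ^ 4 ∣ N := by
    rw [← hfact]
    have h4 : (2:ℕ)^4 = 2 * 2 * (2 * 2) := by norm_num
    rw [h4]
    exact mul_dvd_mul (mul_dvd_mul hpe hph) (mul_dvd_mul h2G h2G)
  have hm2 : ¬ (2 ∣ m) := by simpa [Nat.odd_iff, Nat.two_dvd_ne_zero] using hm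
  have hcop : Nat.Coprime (2 ^ 4) m := Nat.Coprime.pow_left _
    ((Nat.Prime.coprime_iff_not_dvd Nat.prime_two).mpr hm2)
  have h24 : (2:ℕ) ^ 4 ∣ 2 ^ α := hcop.dvd_of_dvd_mul_right (hNam ▸ h16)
  have := (Nat.pow_dvd_pow_iff_le_right one_lt_two).mp h24
  omega

lemma slash_sum {ι : Type*} (s : Finset ι) (F : ι → ℍ → ℂ) (k : ℤ) (γ : SL(2, ℤ)) :
    (∑ i ∈ s, F i) ∣[k] γ = ∑ i ∈ s, (F i ∣[k] γ) :=
  map_sum (AddMonoidHom.mk' (fun f : ℍ → ℂ => f ∣[k] γ)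
    (fun a b => SlashAction.add_slash k γ a b)) F s

lemma slash_step {N : ℕ} {k : ℤ} (f : ModularForm (Gamma0 N) k) {δ A B : SL(2, ℤ)}
    (hmem : A * δ * B⁻¹ ∈ Gamma0 N) :
    (⇑f ∣[k] A) ∣[k] δ = ⇑f ∣[k] B := by
  rw [← SlashAction.slash_mul, show A * δ = (A * δ * B⁻¹) * B by group,
    SlashAction.slash_mul, ModularForm.SL_slash (f := ⇑f) (A * δ * B⁻¹),
    SlashInvariantForm.slash_action_eqn f ((A * δ * B⁻¹ : SL(2, ℤ)) : GL (Fin 2) ℝ)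
      (show ((A * δ * B⁻¹ : SL(2, ℤ)) : GL (Fin 2) ℝ) ∈
        Subgroup.map (SpecialLinearGroup.mapGL ℝ) (Gamma0 N) from Subgroup.mem_map_of_mem _ hmem)]

lemma sum_perm {M : Type*} [AddCommMonoid M] {H : ℕ} (hH : 0 < H) (F G : ℕ → M)
    (u v w : ZMod H) (hu : IsUnit u) (hv : IsUnit v)
    (hFG : ∀ j, j < H → ∀ j', j' < H →
      u * (j' : ZMod H) = v * (j : ZMod H) + w → G j = F j') :
    ∑ j ∈ Finset.range H, G j = ∑ j ∈ Finset.range H, F j := by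
  haveI : NeZero H := ⟨hH.ne'⟩
  have hu1 : u * u⁻¹ = 1 := ZMod.mul_inv_of_unit u hu
  have hv1 : v * v⁻¹ = 1 := ZMod.mul_inv_of_unit v hv
  refine Finset.sum_nbij' (i := fun j => (u⁻¹ * (v * (j : ZMod H) + w)).val)
    (j := fun j => (v⁻¹ * (u * (j : ZMod H) - w)).val)
    (fun a _ => Finset.mem_range.mpr (ZMod.val_lt _))
    (fun a _ => Finset.mem_range.mpr (ZMod.val_lt _)) ?_ ?_ ?_
  · intro a ha
    rw [ZMod.natCast_zmod_val]
    have key : v⁻¹ * (u * (u⁻¹ * (v * (a : ZMod H) + w)) - w) = (a : ZMod H) := by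
      linear_combination (v⁻¹ * (v * (a : ZMod H) + w)) * hu1 + (a : ZMod H) * hv1
    rw [key, ZMod.val_cast_of_lt (Finset.mem_range.mp ha)]
  · intro a ha
    rw [ZMod.natCast_zmod_val]
    have key : u⁻¹ * (v * (v⁻¹ * (u * (a : ZMod H) - w)) + w) = (a : ZMod H) := by
      linear_combination (u⁻¹ * (u * (a : ZMod H) - w)) * hv1 + (a : ZMod H) * hu1
    rw [key, ZMod.val_cast_of_lt (Finset.mem_range.mp ha)]
  · intro a ha
    refine hFG a (Finset.mem_range.mp ha) _ (ZMod.val_lt _) ?_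
    rw [ZMod.natCast_zmod_val]
    linear_combination (v * (a : ZMod H) + w) * hu1

/-- Let `N = 2^α·m` be a positive integer with `α ≤ 3` and `m` odd and squarefree.  Let `e` be a
positive divisor of `N`, `k` an integer, and `f` a modular form of weight `k` for `Γ₀(N)`.  Set
`h = N / gcd(e², N)` and `g = ∑_{j=0}^{h-1} f ∣[k] (U_e T^j)`.  Then `g ∣[k] δ = g` for every
`δ ∈ Γ₀(N)`. -/
theorem stmt_2 (N : ℕ) (hN : 0 < N) (α m : ℕ) (hα : α ≤ 3) (hm : Odd m)
    (hsf : Squarefree m) (hNam : N = 2 ^ α * m)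
    (e : ℕ) (he : 0 < e) (heN : e ∣ N) (k : ℤ)
    (f : ModularForm (Gamma0 N) k) (g : ℍ → ℂ)
    (hg : g = ∑ j ∈ Finset.range (N / Nat.gcd (e ^ 2) N),
      (⇑f) ∣[k] (Ue (e : ℤ) * ModularGroup.T ^ j)) :
    ∀ δ ∈ Gamma0 N, g ∣[k] δ = g := by
  intro δ hδ
  have hn₁0 : 0 < N / e := Nat.div_pos (Nat.le_of_dvd hN heN) he
  set n₁ := N / e with hn₁def
  set G := Nat.gcd e n₁ with hGdef
  set e₁ := e / G with he₁def
  set H := n₁ / G with hHdef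
  have hG0 : 0 < G := Nat.gcd_pos_of_pos_left _ he
  have hge : G ∣ e := Nat.gcd_dvd_left _ _
  have hgn : G ∣ n₁ := Nat.gcd_dvd_right _ _
  have hen : e * n₁ = N := Nat.mul_div_cancel' heN
  have he1 : e₁ * G = e := Nat.div_mul_cancel hge
  have hh1 : H * G = n₁ := Nat.div_mul_cancel hgn
  have hH0 : 0 < H := Nat.div_pos (Nat.le_of_dvd hn₁0 hgn) hG0
  have hrange : N / Nat.gcd (e ^ 2) N = H := by
    rw [pow_two, ← hen, Nat.gcd_mul_left, ← hGdef, ← hh1,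
      show e * (H * G) = e * G * H by ring]
    exact Nat.mul_div_cancel_left H (Nat.mul_pos he hG0)
  rw [hrange] at hg
  subst hg
  rw [slash_sum]
  have hGG : G * G ∣ N := hen ▸ mul_dvd_mul hge hgn
  have hG2 : G ∣ 2 := sq_dvd_two hα hm hsf G (hNam ▸ hGG)
  have hcop : Nat.Coprime e₁ H := coprime_e1_h hα hm hsf hNam heN
  have hdet : δ.1 0 0 * δ.1 1 1 - δ.1 0 1 * δ.1 1 0 = 1 := by
    have h := δ.property; rwa [Matrix.det_fin_two] at h
  have hNC : (N : ℤ) ∣ δ.1 1 0 := (ZMod.intCast_zmod_eq_zero_iff_dvd _ _).mp (Gamma0_mem.mp hδ)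
  have hHN : H ∣ N := dvd_trans ⟨G, hh1.symm⟩ ⟨e, by rw [← hen, mul_comm]⟩
  have hHC : (H : ℤ) ∣ δ.1 1 0 := dvd_trans (Int.natCast_dvd_natCast.mpr hHN) hNC
  have hGDA : (G : ℤ) ∣ δ.1 1 1 - δ.1 0 0 := by
    rcases (Nat.dvd_prime Nat.prime_two).mp hG2 with h1 | h2
    · rw [h1]; exact one_dvd _
    · rw [h2]
      have h2N : (2 : ℤ) ∣ (N : ℤ) := by
        exact_mod_cast Int.natCast_dvd_natCast.mpr ((h2 ▸ hge).trans heN)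
      obtain ⟨c₂, hc₂⟩ := h2N.trans hNC
      have hoddAD : Odd (δ.1 0 0 * δ.1 1 1) := ⟨δ.1 0 1 * c₂, by linear_combination hdet + δ.1 0 1 * hc₂⟩
      rw [Int.odd_mul] at hoddAD
      exact_mod_cast (Odd.sub_odd hoddAD.2 hoddAD.1).two_dvd
  obtain ⟨t, ht⟩ := hGDA
  haveI : NeZero H := ⟨hH0.ne'⟩
  have hCz : ((δ.1 1 0 : ℤ) : ZMod H) = 0 := (ZMod.intCast_zmod_eq_zero_iff_dvd _ _).mpr hHC
  have hADone : ((δ.1 0 0 : ℤ) : ZMod H) * ((δ.1 1 1 : ℤ) : ZMod H) = 1 := by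
    have h1 := congrArg (fun z : ℤ => (z : ZMod H)) hdet
    push_cast at h1
    rw [hCz, mul_zero, sub_zero] at h1
    exact h1
  have hUA : IsUnit ((δ.1 0 0 : ℤ) : ZMod H) := IsUnit.of_mul_eq_one _ hADone
  have hUD : IsUnit ((δ.1 1 1 : ℤ) : ZMod H) :=
    IsUnit.of_mul_eq_one _ (by rw [mul_comm]; exact hADone)
  have hUe₁ : IsUnit ((e₁ : ℕ) : ZMod H) := (ZMod.isUnit_iff_coprime e₁ H).mpr hcop
  refine sum_perm hH0 _ _
    ((e₁ : ZMod H) * ((δ.1 0 0 : ℤ) : ZMod H))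
    ((e₁ : ZMod H) * ((δ.1 1 1 : ℤ) : ZMod H))
    ((e₁ : ZMod H) * ((δ.1 0 1 : ℤ) : ZMod H) + ((t : ℤ) : ZMod H))
    (hUe₁.mul hUA) (hUe₁.mul hUD) ?_
  intro j hj j' hj' hcong
  have hdvdH : (H : ℤ) ∣ (e₁ * δ.1 0 0 * j' - e₁ * δ.1 1 1 * j - e₁ * δ.1 0 1 - t) := by
    rw [← ZMod.intCast_zmod_eq_zero_iff_dvd]
    push_cast
    linear_combination hcong
  obtain ⟨q, hq⟩ := hdvdH
  have he1' : (e₁ : ℤ) * G = e := by exact_mod_cast he1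
  have hh1' : (H : ℤ) * G = (n₁ : ℤ) := by exact_mod_cast hh1
  have hdvdn : ((n₁ : ℕ) : ℤ) ∣
      (e * δ.1 0 0 * j' - e * δ.1 1 1 * j - e * δ.1 0 1 - δ.1 1 1 + δ.1 0 0) := by
    refine ⟨q, ?_⟩
    linear_combination (G : ℤ) * hq - (δ.1 0 0 * (j' : ℤ) - δ.1 1 1 * (j : ℤ) - δ.1 0 1) * he1'
      - ht + q * hh1'
  rw [show (ModularGroup.T ^ j : SL(2, ℤ)) = ModularGroup.T ^ (j : ℤ) from (zpow_natCast _ j).symm,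
    show (ModularGroup.T ^ j' : SL(2, ℤ)) = ModularGroup.T ^ (j' : ℤ) from (zpow_natCast _ j').symm]
  exact slash_step f (key_mem e heN hδ (j : ℤ) (j' : ℤ) hdvdn)
end

section
/- Let N be a positive integer, e a positive divisor of N, and δ = [[a,b],[c,d]] ∈ Γ₀(N) with a ≡ d (mod gcd(e, N/e)). Set h = N / gcd(e², N). Then there exists a bijection σ : ℤ/hℤ → ℤ/hℤ such that for all integers n and n' with n' ≡ σ(n mod h) (mod h), the matrix U_e · T^n · δ · T^{−n'} · U_e^{−1} belongs to Γ₀(N). -/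
open Matrix CongruenceSubgroup
open scoped MatrixGroups

/-- Let `N` be a positive integer, `e` a positive divisor of `N`, and `δ = [[a,b],[c,d]] ∈ Γ₀(N)`
with `a ≡ d (mod gcd(e, N/e))`.  Set `h = N / gcd(e², N)`.  Then there is a bijection
`σ : ℤ/hℤ → ℤ/hℤ` such that for all integers `n, n'` with `n' ≡ σ(n mod h) (mod h)` the matrix
`U_e T^n δ T^{-n'} U_e⁻¹` belongs to `Γ₀(N)`. -/
theorem stmt_7 (N : ℕ) (hN : 0 < N) (e : ℕ) (he : 0 < e) (heN : e ∣ N)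
    (δ : SL(2, ℤ)) (hδ : δ ∈ Gamma0 N)
    (had : ((δ : Matrix (Fin 2) (Fin 2) ℤ) 0 0)
      ≡ ((δ : Matrix (Fin 2) (Fin 2) ℤ) 1 1) [ZMOD (Nat.gcd e (N / e))]) :
    ∃ σ : ZMod (N / Nat.gcd (e ^ 2) N) → ZMod (N / Nat.gcd (e ^ 2) N),
      Function.Bijective σ ∧
      ∀ n n' : ℤ, (n' : ZMod (N / Nat.gcd (e ^ 2) N)) = σ (n : ZMod (N / Nat.gcd (e ^ 2) N)) →
        Ue (e : ℤ) * ModularGroup.T ^ n * δ * ModularGroup.T ^ (-n') * (Ue (e : ℤ))⁻¹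
          ∈ Gamma0 N := by
  set a : ℤ := (δ : Matrix (Fin 2) (Fin 2) ℤ) 0 0 with ha
  set b : ℤ := (δ : Matrix (Fin 2) (Fin 2) ℤ) 0 1 with hb
  set c : ℤ := (δ : Matrix (Fin 2) (Fin 2) ℤ) 1 0 with hcdef
  set d : ℤ := (δ : Matrix (Fin 2) (Fin 2) ℤ) 1 1 with hd
  set g : ℕ := Nat.gcd (e ^ 2) N with hg
  set h : ℕ := N / Nat.gcd (e ^ 2) N with hh
  set E : ℤ := (e : ℤ) with hE
  set G : ℤ := (g : ℤ) with hGdef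
  set H : ℤ := (h : ℤ) with hHdef
  -- basic facts
  have hgN : g ∣ N := Nat.gcd_dvd_right _ _
  have hgpos : 0 < g := Nat.gcd_pos_of_pos_right _ hN
  have hGHN : G * H = (N : ℤ) := by
    rw [hGdef, hHdef]
    exact_mod_cast congrArg (Nat.cast : ℕ → ℤ) (Nat.mul_div_cancel' hgN)
  have hG0 : G ≠ 0 := by positivity
  -- q with G * q = E^2
  obtain ⟨q, hqe⟩ : ∃ q : ℤ, G * q = E ^ 2 := by
    have : (g : ℤ) ∣ ((e ^ 2 : ℕ) : ℤ) := Int.natCast_dvd_natCast.mpr (Nat.gcd_dvd_left _ _)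
    obtain ⟨q, hq⟩ := this
    exact ⟨q, by rw [hGdef, hE]; push_cast at hq ⊢; linarith⟩
  -- g = e * gcd e (N/e)
  have hge : g = e * Nat.gcd e (N / e) := by
    rw [hg]
    conv_lhs => rw [pow_two, ← Nat.mul_div_cancel' heN]
    exact Nat.gcd_mul_left e e (N / e)
  -- w with E * (d - a) = G * w
  obtain ⟨w, hwG⟩ : ∃ w : ℤ, E * (d - a) = G * w := by
    obtain ⟨t, ht⟩ : ((Nat.gcd e (N / e) : ℤ)) ∣ d - a := Int.ModEq.dvd had
    exact ⟨t, by rw [ht, hGdef, hge]; push_cast; ring⟩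
  -- c divisible by N
  have hcZ : ((c : ℤ) : ZMod N) = 0 := by exact_mod_cast Gamma0_mem.mp hδ
  obtain ⟨cp, hcc⟩ : ∃ cp : ℤ, c = (N : ℤ) * cp :=
    (ZMod.intCast_zmod_eq_zero_iff_dvd c N).mp hcZ
  -- determinant
  have hdet : a * d - b * c = 1 := by
    have := δ.property
    rw [Matrix.det_fin_two] at this
    rw [ha, hb, hcdef, hd]; linarith [this]
  -- a coprime to N
  have hacop : Int.gcd a (N : ℤ) = 1 := by
    rw [← Int.isCoprime_iff_gcd_eq_one]
    exact ⟨d, -(b * cp), by linear_combination hdet + b * hcc⟩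
  -- gcd (E^2 * a) N = g
  have hgaN : Int.gcd (E ^ 2 * a) (N : ℤ) = g := by
    have h1 : (E ^ 2 * a).natAbs = e ^ 2 * a.natAbs := by
      rw [Int.natAbs_mul, Int.natAbs_pow]; simp [hE]
    have h2 : Nat.Coprime a.natAbs N := by
      have : Int.gcd a (N : ℤ) = Nat.gcd a.natAbs N := by
        simp [Int.gcd, Int.natAbs_natCast]
      rw [Nat.Coprime, ← this, hacop]
    show Nat.gcd (E ^ 2 * a).natAbs ((N : ℤ)).natAbs = g
    rw [h1, Int.natAbs_natCast]
    exact Nat.Coprime.gcd_mul_right_cancel _ h2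
  -- Bezout
  set x : ℤ := Int.gcdA (E ^ 2 * a) (N : ℤ) with hx
  set y : ℤ := Int.gcdB (E ^ 2 * a) (N : ℤ) with hy
  have hG : G = E ^ 2 * a * x + (N : ℤ) * y := by
    rw [hGdef, ← hgaN]; exact Int.gcd_eq_gcd_ab _ _
  -- scalar Bezout mod h
  have h1 : q * a * x + H * y = 1 := by
    apply mul_left_cancel₀ hG0
    linear_combination a * x * hqe + y * hGHN - hG
  have had2 : a * d = 1 + b * cp * (G * H) := by
    linear_combination hdet + b * hcc - b * cp * hGHN
  -- the unit of ZMod h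
  have hdvdu : (h : ℤ) ∣ (x * q * d * a ^ 2 - 1) :=
    ⟨b * cp * G - y - y * b * cp * G * H, by linear_combination (a * d) * h1 + (1 - H * y) * had2⟩
  have huv : ((x * q * d : ℤ) : ZMod h) * ((a ^ 2 : ℤ) : ZMod h) = 1 := by
    have := (ZMod.intCast_zmod_eq_zero_iff_dvd _ h).mpr hdvdu
    push_cast at this ⊢
    linear_combination this
  refine ⟨fun z => ((x * q * d : ℤ) : ZMod h) * z + ((x * (w + q * b) : ℤ) : ZMod h), ?_, ?_⟩
  · refine Function.bijective_iff_has_inverse.mpr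
      ⟨fun z => ((a ^ 2 : ℤ) : ZMod h) * (z - ((x * (w + q * b) : ℤ) : ZMod h)), ?_, ?_⟩
    · intro z; simp only []; linear_combination z * huv
    · intro z; simp only []
      linear_combination (z - ((x * (w + q * b) : ℤ) : ZMod h)) * huv
  · intro n n' hn
    -- extract the integer congruence
    have hzz : ((n' : ℤ) : ZMod h) = ((x * (w + q * b) + x * q * d * n : ℤ) : ZMod h) := by
      rw [hn]
      push_cast
      ring
    obtain ⟨k0, hk0⟩ := Int.ModEq.dvd ((ZMod.intCast_eq_intCast_iff _ _ _).mp hzz)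
    have hk : n' = x * (w + q * b) + x * q * d * n + H * (-k0) := by
      rw [hHdef]; linarith [hk0]
    set k : ℤ := -k0 with hkdef
    -- matrix entry
    have hinv : (Ue E)⁻¹ = Ue (-E) := by
      apply inv_eq_of_mul_eq_one_right
      apply Subtype.ext
      rw [Matrix.SpecialLinearGroup.coe_mul]
      simp [Ue, Matrix.SpecialLinearGroup.coe_mul, Matrix.mul_fin_two, Matrix.one_fin_two]
    have hent : ((Ue E * ModularGroup.T ^ n * δ * ModularGroup.T ^ (-n') * (Ue E)⁻¹ : SL(2,ℤ)) :
        Matrix (Fin 2) (Fin 2) ℤ) 1 0 =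
        E * a + E*n*c + c - E^2*b - E^2*n*d + E^2*a*n' + E^2*n*n'*c - E*d + E*c*n' := by
      have h1' : ((Ue E : SL(2,ℤ)) : Matrix (Fin 2) (Fin 2) ℤ) = !![1,0;E,1] := rfl
      have h2' : ((Ue (-E) : SL(2,ℤ)) : Matrix (Fin 2) (Fin 2) ℤ) = !![1,0;-E,1] := rfl
      rw [hinv]
      simp only [Matrix.SpecialLinearGroup.coe_mul, ModularGroup.coe_T_zpow, h1', h2']
      rw [Matrix.eta_fin_two (δ : Matrix (Fin 2) (Fin 2) ℤ)]
      simp [Matrix.mul_fin_two, ← ha, ← hb, ← hcdef, ← hd]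
      ring
    rw [Gamma0_mem, hent, ZMod.intCast_zmod_eq_zero_iff_dvd]
    refine ⟨-y * (w + q*b + q*d*n) + q*a*k + cp*(1 + E*n + E^2*n*n' + E*n'), ?_⟩
    linear_combination (1 + E*n + E^2*n*n' + E*n') * hcc + E^2*a*hk - hwG
      + (b + n*d - a*H*k) * hqe + (-(w + q*b + q*d*n)) * hG + q*a*k*hGHN
end

section
/- Let N be a positive integer, e an integer, and n an integer. Then the matrix U_e · T^n · U_e^{−1} belongs to Γ₀(N) if and only if N / gcd(e², N) divides n. In particular, the width of the cusp 1/e of Γ₀(N) is N / gcd(e², N). -/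
open Matrix CongruenceSubgroup
open scoped MatrixGroups

theorem dvd_aux (N : ℕ) (hN : 0 < N) (e n : ℤ) :
    ((N / Int.gcd (e ^ 2) (N : ℤ) : ℕ) : ℤ) ∣ n ↔ (N:ℤ) ∣ e^2 * n := by
  set g : ℕ := Int.gcd (e ^ 2) (N : ℤ) with hg
  have hg0 : 0 < g := Nat.pos_of_ne_zero (fun h => by
    simp [hg, Int.gcd_eq_zero_iff] at h; omega)
  have hgz : ((g:ℤ)) ≠ 0 := Int.natCast_ne_zero.mpr hg0.ne'
  obtain ⟨k, hk⟩ : (g:ℤ) ∣ (N:ℤ) := Int.gcd_dvd_right _ _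
  obtain ⟨m, hm⟩ : (g:ℤ) ∣ e^2 := Int.gcd_dvd_left _ _
  have h1 : e^2 / (g:ℤ) = m := by rw [hm]; exact Int.mul_ediv_cancel_left _ hgz
  have h2 : (N:ℤ) / (g:ℤ) = k := by rw [hk]; exact Int.mul_ediv_cancel_left _ hgz
  have hkcast : ((N / g : ℕ) : ℤ) = k := by
    rw [Int.natCast_div, h2]
  have hcop : IsCoprime m k := by
    rw [Int.isCoprime_iff_gcd_eq_one]
    have := Int.gcd_div_gcd_div_gcd (i := e^2) (j := (N:ℤ)) hg0
    rwa [← hg, h1, h2] at this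
  rw [hkcast, hk, hm]
  constructor
  · rintro ⟨c, rfl⟩; exact ⟨m * c, by ring⟩
  · intro h
    have hk' : k ∣ m * n :=
      (mul_dvd_mul_iff_left hgz).mp (by rwa [mul_assoc] at h)
    exact hcop.symm.dvd_of_dvd_mul_left hk'

theorem entry_aux (e n : ℤ) :
    ((Ue e * ModularGroup.T ^ n * (Ue e)⁻¹ : SL(2,ℤ)) : Matrix (Fin 2) (Fin 2) ℤ) 1 0
      = -(e ^ 2 * n) := by
  rw [Matrix.SpecialLinearGroup.coe_mul, Matrix.SpecialLinearGroup.coe_mul, Matrix.SpecialLinearGroup.coe_inv]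
  simp [Ue, Matrix.SpecialLinearGroup.SL2_inv_expl, ModularGroup.coe_T_zpow,
    Matrix.mul_apply, Fin.sum_univ_succ, Matrix.adjugate_fin_two]
  ring

/-- Let `N` be a positive integer and `e`, `n` integers.  Then `U_e T^n U_e⁻¹ ∈ Γ₀(N)` if and
only if `N / gcd(e², N)` divides `n`; i.e. the width of the cusp `1/e` of `Γ₀(N)` is
`N / gcd(e², N)`. -/
theorem stmt_10 (N : ℕ) (hN : 0 < N) (e n : ℤ) :
    Ue e * ModularGroup.T ^ n * (Ue e)⁻¹ ∈ Gamma0 N ↔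
      ((N / Int.gcd (e ^ 2) (N : ℤ) : ℕ) : ℤ) ∣ n := by
  rw [Gamma0_mem, dvd_aux N hN e n]
  rw [show ((Ue e * ModularGroup.T ^ n * (Ue e)⁻¹ : SL(2,ℤ)) : Matrix (Fin 2) (Fin 2) ℤ) 1 0
      = -(e ^ 2 * n) from entry_aux e n]
  rw [Int.cast_neg, neg_eq_zero, ZMod.intCast_zmod_eq_zero_iff_dvd]
end

section
/- Let h be a positive integer, c : ℤ → ℂ, and F : ℍ → ℂ a function such that for every τ ∈ ℍ the series Σ_{n∈ℤ} c(n)·exp(2πi·n·τ/h) converges (in the sense of unconditional summation, HasSum) to F(τ). Then for every τ ∈ ℍ, the series Σ_{n∈ℤ} c(h·n)·exp(2πi·n·τ) converges (HasSum) to (1/h)·Σ_{j=0}^{h−1} F(τ + j). In other words, averaging F over the translates τ, τ+1, …, τ+h−1 extracts exactly the terms of its Fourier expansion with integral exponents. -/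
open UpperHalfPlane Complex

lemma char_sum (h : ℕ) (hh : 0 < h) (n : ℤ) :
    ∑ j ∈ Finset.range h, Complex.exp (2 * Real.pi * Complex.I * n * (j : ℂ) / h)
      = if (h : ℤ) ∣ n then (h : ℂ) else 0 := by
  have hne : (h : ℂ) ≠ 0 := Nat.cast_ne_zero.mpr hh.ne'
  set ζ : ℂ := Complex.exp (2 * Real.pi * Complex.I * n / h) with hζ
  have hterm : ∀ j ∈ Finset.range h,
      Complex.exp (2 * Real.pi * Complex.I * n * (j : ℂ) / h) = ζ ^ j := by
    intro j _
    rw [hζ, ← Complex.exp_nat_mul]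
    ring_nf
  rw [Finset.sum_congr rfl hterm]
  have hζh : ζ ^ h = 1 := by
    rw [hζ, ← Complex.exp_nat_mul]
    have : (h : ℂ) * (2 * Real.pi * Complex.I * n / h) = n * (2 * Real.pi * Complex.I) := by
      field_simp
    rw [this, Complex.exp_int_mul_two_pi_mul_I]
  by_cases hd : (h : ℤ) ∣ n
  · rw [if_pos hd]
    obtain ⟨k, hk⟩ := hd
    have hz1 : ζ = 1 := by
      rw [hζ, hk]
      have : 2 * Real.pi * Complex.I * ((h : ℤ) * k : ℤ) / h
          = (k : ℤ) * (2 * Real.pi * Complex.I) := by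
        push_cast; field_simp
      rw [this, Complex.exp_int_mul_two_pi_mul_I]
    simp [hz1]
  · have hζ1 : ζ ≠ 1 := by
      intro h1
      apply hd
      rw [hζ, Complex.exp_eq_one_iff] at h1
      obtain ⟨k, hk⟩ := h1
      have h2pi : (2 * Real.pi * Complex.I : ℂ) ≠ 0 := by
        simp [Real.pi_ne_zero, Complex.I_ne_zero]
      have h2 : (n : ℂ) = ((h : ℤ) * k : ℤ) := by
        push_cast
        apply mul_left_cancel₀ h2pi
        field_simp at hk
        linear_combination (2 * Real.pi * Complex.I) * hk
      exact ⟨k, by exact_mod_cast h2⟩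
    rw [geom_sum_eq hζ1, hζh]
    simp [hd]

/-- Let `h` be a positive integer, `c : ℤ → ℂ`, and `F : ℍ → ℂ` such that for every `τ ∈ ℍ`
the series `∑_{n ∈ ℤ} c(n)·exp(2πi·n·τ/h)` sums to `F(τ)`.  Then for every `τ ∈ ℍ` the series
`∑_{n ∈ ℤ} c(h·n)·exp(2πi·n·τ)` sums to `(1/h)·∑_{j=0}^{h-1} F(τ + j)`: averaging `F` over
`τ, τ+1, …, τ+h-1` extracts exactly the terms of the Fourier expansion with integral
exponents. -/
theorem stmt_12 (h : ℕ) (hh : 0 < h) (c : ℤ → ℂ) (F : ℍ → ℂ)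
    (hF : ∀ τ : ℍ, HasSum
      (fun n : ℤ => c n * Complex.exp (2 * Real.pi * Complex.I * n * (τ : ℂ) / h)) (F τ)) :
    ∀ τ : ℍ, HasSum
      (fun n : ℤ => c (h * n) * Complex.exp (2 * Real.pi * Complex.I * n * (τ : ℂ)))
      ((h : ℂ)⁻¹ * ∑ j ∈ Finset.range h, F ((j : ℝ) +ᵥ τ)) := by
  intro τ
  have hne : (h : ℂ) ≠ 0 := Nat.cast_ne_zero.mpr hh.ne'
  -- sum over j of the HasSum's
  have hsum : HasSum (fun n : ℤ => ∑ j ∈ Finset.range h,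
      c n * Complex.exp (2 * Real.pi * Complex.I * n * (((j : ℝ) +ᵥ τ : ℍ) : ℂ) / h))
      (∑ j ∈ Finset.range h, F ((j : ℝ) +ᵥ τ)) :=
    hasSum_sum fun j _ => hF _
  have hmul := hsum.mul_left (h : ℂ)⁻¹
  -- rewrite each term
  have key : ∀ n : ℤ,
      (h : ℂ)⁻¹ * ∑ j ∈ Finset.range h,
        c n * Complex.exp (2 * Real.pi * Complex.I * n * (((j : ℝ) +ᵥ τ : ℍ) : ℂ) / h)
      = if (h : ℤ) ∣ n then c n * Complex.exp (2 * Real.pi * Complex.I * n * (τ : ℂ) / h)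
        else 0 := by
    intro n
    have hcoe : ∀ j : ℕ, (((j : ℝ) +ᵥ τ : ℍ) : ℂ) = (τ : ℂ) + j := by
      intro j; simp [UpperHalfPlane.coe_vadd]; ring
    have hterm : ∀ j ∈ Finset.range h,
        c n * Complex.exp (2 * Real.pi * Complex.I * n * (((j : ℝ) +ᵥ τ : ℍ) : ℂ) / h)
        = c n * Complex.exp (2 * Real.pi * Complex.I * n * (τ : ℂ) / h)
          * Complex.exp (2 * Real.pi * Complex.I * n * (j : ℂ) / h) := by
      intro j _
      have e : Complex.exp (2 * Real.pi * Complex.I * n * ((τ : ℂ) + j) / h)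
          = Complex.exp (2 * Real.pi * Complex.I * n * (τ : ℂ) / h)
            * Complex.exp (2 * Real.pi * Complex.I * n * (j : ℂ) / h) := by
        rw [← Complex.exp_add]; ring_nf
      rw [hcoe j, e]; ring
    rw [Finset.sum_congr rfl hterm, ← Finset.mul_sum, char_sum h hh n]
    by_cases hd : (h : ℤ) ∣ n
    · rw [if_pos hd, if_pos hd]
      field_simp
    · rw [if_neg hd, if_neg hd, mul_zero, mul_zero]
  rw [funext key] at hmul
  -- now restrict to multiples of h
  have hinj : Function.Injective (fun n : ℤ => (h : ℤ) * n) :=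
    mul_right_injective₀ (by exact_mod_cast hh.ne')
  rw [← Function.Injective.hasSum_iff hinj ?_] at hmul
  · convert hmul using 1
    · rfl
    funext n
    simp only [Function.comp]
    rw [if_pos ⟨n, rfl⟩]
    congr 1
    push_cast
    congr 1
    rw [eq_comm, div_eq_iff hne]
    ring
  · intro n hn
    rw [Set.mem_range] at hn
    rw [if_neg]
    intro ⟨k, hk⟩
    exact hn ⟨k, hk.symm⟩
end

section
/- Let U ⊆ ℂ be an open set, p a positive integer, and f : ℂ → ℂ a function that is continuous on U and such that z ↦ f(z)^p is complex-differentiable on U (holomorphic on U). Then f is complex-differentiable on U. -/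
open Filter Set
open scoped Topology

/-- If `f` is continuous at `z₀`, `f^p` is differentiable at `z₀`, and `f z₀ ≠ 0`, then `f` is
differentiable at `z₀`: compose `f^p` with a local holomorphic inverse of `w ↦ w^p`. -/
lemma aux_diffAt_of_ne (p : ℕ) (hp : 0 < p) {f : ℂ → ℂ} {z0 : ℂ} (hc : ContinuousAt f z0)
    (hd : DifferentiableAt ℂ (fun z => f z ^ p) z0) (hne : f z0 ≠ 0) :
    DifferentiableAt ℂ f z0 := by
  have hsd : HasStrictDerivAt (fun w : ℂ => w ^ p) ((p : ℂ) * f z0 ^ (p - 1)) (f z0) :=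
    hasStrictDerivAt_pow p (f z0)
  have h0 : (p : ℂ) * f z0 ^ (p - 1) ≠ 0 :=
    mul_ne_zero (Nat.cast_ne_zero.2 hp.ne') (pow_ne_zero _ hne)
  set g := hsd.localInverse _ _ _ h0 with hg_def
  have hg : DifferentiableAt ℂ g (f z0 ^ p) :=
    (HasStrictDerivAt.hasDerivAt (hsd.to_localInverse h0)).differentiableAt
  have hleft : ∀ᶠ w in 𝓝 (f z0), g (w ^ p) = w :=
    (hsd.hasStrictFDerivAt_equiv h0).eventually_left_inverse
  have hEq : ∀ᶠ z in 𝓝 z0, g (f z ^ p) = f z := hc.eventually hleft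
  have hcomp : DifferentiableAt ℂ (fun z => g (f z ^ p)) z0 := hg.comp z0 hd
  exact hcomp.congr_of_eventuallyEq (Filter.eventuallyEq_of_mem hEq fun z hz => hz.symm)

/-- Let `U ⊆ ℂ` be open, `p` a positive integer, and `f : ℂ → ℂ` continuous on `U` such that
`z ↦ f(z)^p` is holomorphic on `U`.  Then `f` is holomorphic on `U`. -/
theorem stmt_14 (U : Set ℂ) (hU : IsOpen U) (p : ℕ) (hp : 0 < p) (f : ℂ → ℂ)
    (hf : ContinuousOn f U) (hfp : DifferentiableOn ℂ (fun z => f z ^ p) U) :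
    DifferentiableOn ℂ f U := by
  intro z0 hz0
  have hU' : U ∈ 𝓝 z0 := hU.mem_nhds hz0
  suffices h : DifferentiableAt ℂ f z0 from h.differentiableWithinAt
  have han : AnalyticAt ℂ (fun z => f z ^ p) z0 := hfp.analyticAt hU'
  rcases han.eventually_eq_zero_or_eventually_ne_zero with h | h
  · -- `f^p ≡ 0` near `z0`, hence `f ≡ 0` near `z0`
    have hz : ∀ᶠ z in 𝓝 z0, f z = 0 := by
      filter_upwards [h] with z hz
      exact pow_eq_zero_iff hp.ne' |>.mp hz
    exact (differentiableAt_const (0 : ℂ)).congr_of_eventuallyEq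
      (Filter.eventuallyEq_of_mem hz fun z hzz => hzz)
  · -- `f^p ≠ 0` on a punctured neighborhood of `z0`
    have h' : ∀ᶠ z in 𝓝 z0, z ≠ z0 → f z ^ p ≠ 0 := eventually_nhdsWithin_iff.mp h
    obtain ⟨t, htU, ht, hzt⟩ := eventually_nhds_iff.mp (h'.and (eventually_mem_nhds_iff.mpr hU'))
    have htnhds : t ∈ 𝓝 z0 := ht.mem_nhds hzt
    have hdiff : DifferentiableOn ℂ f (t \ {z0}) := by
      intro z hz
      have hzU : U ∈ 𝓝 z := (htU z hz.1).2
      have hfz : f z ≠ 0 := fun h0 => (htU z hz.1).1 hz.2 (by simp [h0, hp.ne'])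
      exact (aux_diffAt_of_ne p hp ((hf.continuousAt hzU))
        (hfp.differentiableAt hzU) hfz).differentiableWithinAt
    have := (Complex.differentiableOn_compl_singleton_and_continuousAt_iff htnhds).mp
      ⟨hdiff, hf.continuousAt hU'⟩
    exact this.differentiableAt htnhds
end

section
/- Let m be a positive integer and c : ℕ → ℂ a function satisfying c(k) = c(gcd(k, m)) for every positive integer k. Then for every positive integer d that does not divide m, Σ_{d' | d} μ(d/d')·c(d') = 0, where the sum is over the positive divisors d' of d and μ is the Möbius function. -/
open ArithmeticFunction
open scoped ArithmeticFunction.Moebius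

/-- Let `m` be a positive integer and `c : ℕ → ℂ` satisfy `c(k) = c(gcd(k, m))` for every
positive integer `k`.  Then for every positive integer `d` not dividing `m`,
`∑_{d' ∣ d} μ(d/d')·c(d') = 0`, where `μ` is the Möbius function. -/
theorem stmt_15 (m : ℕ) (hm : 0 < m) (c : ℕ → ℂ)
    (hc : ∀ k : ℕ, 0 < k → c k = c (Nat.gcd k m))
    (d : ℕ) (hd : 0 < d) (hdm : ¬ d ∣ m) :
    ∑ d' ∈ d.divisors, (μ (d / d') : ℂ) * c d' = 0 := by
  set h : ℕ → ℂ := fun n => ∑ d' ∈ n.divisors, (μ (n / d') : ℂ) * c d' with hh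
  have inv : ∀ n : ℕ, 0 < n → ∑ e ∈ n.divisors, h e = c n := by
    have : ∀ n > 0, ∑ e ∈ n.divisors, h e = c n := by
      rw [ArithmeticFunction.sum_eq_iff_sum_mul_moebius_eq]
      intro n hn
      rw [Nat.sum_divisorsAntidiagonal' (f := fun a b => (μ a : ℂ) * c b)]
    exact fun n hn => this n hn
  have key : ∀ d : ℕ, 0 < d → ¬ d ∣ m → h d = 0 := by
    intro d
    induction d using Nat.strong_induction_on with
    | _ d ih =>
      intro hd hdm
      have hg : 0 < Nat.gcd d m := Nat.gcd_pos_of_pos_left m hd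
      have hgd : Nat.gcd d m < d := by
        refine lt_of_le_of_ne (Nat.le_of_dvd hd (Nat.gcd_dvd_left d m)) ?_
        intro he
        exact hdm (he ▸ Nat.gcd_dvd_right d m)
      have hprop : ∑ e ∈ d.properDivisors, h e = ∑ e ∈ (Nat.gcd d m).divisors, h e := by
        refine (Finset.sum_subset ?_ ?_).symm
        · intro e he
          rw [Nat.mem_divisors] at he
          rw [Nat.mem_properDivisors]
          exact ⟨he.1.trans (Nat.gcd_dvd_left d m),
            lt_of_le_of_lt (Nat.le_of_dvd hg he.1) hgd⟩
        · intro e he hne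
          rw [Nat.mem_properDivisors] at he
          refine ih e he.2 (Nat.pos_of_mem_properDivisors
            (by rw [Nat.mem_properDivisors]; exact he)) (fun hem => hne ?_)
          exact Nat.mem_divisors.mpr ⟨Nat.dvd_gcd he.1 hem, hg.ne'⟩
      have hsplit := inv d hd
      rw [← Nat.cons_self_properDivisors hd.ne', Finset.sum_cons] at hsplit
      have : h d + ∑ e ∈ d.properDivisors, h e = c d := hsplit
      rw [hprop, inv _ hg, hc d hd] at this
      linear_combination this
  exact key d hd hdm
end

section
/- Let n be a positive integer and b : ℕ → ℤ a function. In the ring ℂ⟦X⟧ of formal power series over ℂ, define P = Π_{d | n} (1 − X^d)^{b(d)}, the product over positive divisors d of n, where each factor is the b(d)-th power of the unit 1 − X^d (negative exponents interpreted via the inverse of this unit). Define c(k) = Σ_{d | gcd(k,n)} d·b(d) for positive integers k, and let Q be the formal power series Σ_{k≥1} c(k)·X^k. Then X·P′ = −Q·P, where P′ denotes the formal derivative of P. (Equivalently, since P has constant term 1, P = exp(−Σ_{k≥1} c(k)·X^k/k).) -/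
open PowerSeries

noncomputable def geo (d : ℕ) : PowerSeries ℂ := PowerSeries.mk fun k => if d ∣ k then 1 else 0

lemma geo_mul (d : ℕ) (hd : 0 < d) :
    (1 - (PowerSeries.X : PowerSeries ℂ) ^ d) * geo d = 1 := by
  ext k
  rw [sub_mul, one_mul, map_sub, coeff_X_pow_mul' (geo d) d k, geo, coeff_mk, coeff_one]
  by_cases h0 : k = 0
  · subst h0
    simp [hd.ne']
  · rcases le_or_gt d k with h | h
    · rw [if_pos h, coeff_mk]
      have hiff : d ∣ k - d ↔ d ∣ k := by
        constructor
        · intro hh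
          have : k = (k - d) + d := by omega
          rw [this]; exact Nat.dvd_add hh (dvd_refl d)
        · intro hh; exact Nat.dvd_sub hh (dvd_refl d)
      simp [hiff, h0]
    · have hnd : ¬ d ∣ k := fun hh => absurd (Nat.le_of_dvd (Nat.pos_of_ne_zero h0) hh) (not_le.mpr h)
      simp [not_le.mpr h, hnd, h0]

noncomputable def lder (U : (PowerSeries ℂ)ˣ) : PowerSeries ℂ :=
  PowerSeries.X * (PowerSeries.derivative ℂ (U : PowerSeries ℂ)) * ((U⁻¹ : (PowerSeries ℂ)ˣ) : PowerSeries ℂ)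

lemma lder_one : lder 1 = 0 := by
  simp [lder]

lemma lder_mul (U V : (PowerSeries ℂ)ˣ) : lder (U * V) = lder U + lder V := by
  have h1 : ((U : PowerSeries ℂ)) * ((U⁻¹ : (PowerSeries ℂ)ˣ) : PowerSeries ℂ) = 1 := by
    exact_mod_cast U.mul_inv
  have h2 : ((V : PowerSeries ℂ)) * ((V⁻¹ : (PowerSeries ℂ)ˣ) : PowerSeries ℂ) = 1 := by
    exact_mod_cast V.mul_inv
  simp only [lder, Units.val_mul, mul_inv_rev, Derivation.leibniz, smul_eq_mul]
  linear_combination (PowerSeries.X * (PowerSeries.derivative ℂ (V : PowerSeries ℂ)) *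
      ((V⁻¹ : (PowerSeries ℂ)ˣ) : PowerSeries ℂ)) * h1 +
    (PowerSeries.X * (PowerSeries.derivative ℂ (U : PowerSeries ℂ)) *
      ((U⁻¹ : (PowerSeries ℂ)ˣ) : PowerSeries ℂ)) * h2

lemma lder_inv (U : (PowerSeries ℂ)ˣ) : lder U⁻¹ = - lder U := by
  have h := lder_mul U U⁻¹
  rw [mul_inv_cancel, lder_one] at h
  linear_combination -h

lemma lder_zpow (U : (PowerSeries ℂ)ˣ) (m : ℤ) : lder (U ^ m) = m • lder U := by
  induction m using Int.induction_on with
  | zero => simpa using lder_one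
  | succ k ih => rw [zpow_add, zpow_one, lder_mul, ih]; rw [add_smul, one_smul]
  | pred k ih =>
      rw [show (-(k:ℤ) - 1) = (-(k:ℤ)) + (-1) by ring, zpow_add, lder_mul, ih, zpow_neg_one, lder_inv]
      rw [add_smul]
      simp

lemma lder_prod {s : Finset ℕ} (f : ℕ → (PowerSeries ℂ)ˣ) :
    lder (∏ d ∈ s, f d) = ∑ d ∈ s, lder (f d) := by
  induction s using Finset.cons_induction with
  | empty => simpa using lder_one
  | cons a s ha ih => rw [Finset.prod_cons, Finset.sum_cons, lder_mul, ih]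

lemma geo2 (d : ℕ) (hd : 0 < d) :
    (PowerSeries.X : PowerSeries ℂ) ^ d * geo d
      = PowerSeries.mk fun k => if d ∣ k ∧ k ≠ 0 then 1 else 0 := by
  ext k
  rw [coeff_X_pow_mul' (geo d) d k, coeff_mk]
  rcases le_or_gt d k with h | h
  · rw [if_pos h, geo, coeff_mk]
    have hk0 : k ≠ 0 := by omega
    have hiff : d ∣ k - d ↔ d ∣ k := by
      constructor
      · intro hh
        have : k = (k - d) + d := by omega
        rw [this]; exact Nat.dvd_add hh (dvd_refl d)
      · intro hh; exact Nat.dvd_sub hh (dvd_refl d)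
    simp [hiff, hk0]
  · have : ¬ (d ∣ k ∧ k ≠ 0) := by
      rintro ⟨h1, h2⟩
      exact absurd (Nat.le_of_dvd (Nat.pos_of_ne_zero h2) h1) (not_le.mpr h)
    simp [not_le.mpr h, this]

lemma lder_unit (d : ℕ) (hd : 0 < d) (u : (PowerSeries ℂ)ˣ)
    (hu : (u : PowerSeries ℂ) = 1 - (PowerSeries.X : PowerSeries ℂ) ^ d) :
    lder u = -((d : ℂ) • PowerSeries.mk fun k => if d ∣ k ∧ k ≠ 0 then (1:ℂ) else 0) := by
  have hinv : ((u⁻¹ : (PowerSeries ℂ)ˣ) : PowerSeries ℂ) = geo d := by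
    have h1 : (u : PowerSeries ℂ) * geo d = 1 := by rw [hu]; exact geo_mul d hd
    calc ((u⁻¹ : (PowerSeries ℂ)ˣ) : PowerSeries ℂ)
        = ((u⁻¹ : (PowerSeries ℂ)ˣ) : PowerSeries ℂ) * ((u : PowerSeries ℂ) * geo d) := by
          rw [h1, mul_one]
      _ = (((u⁻¹ : (PowerSeries ℂ)ˣ) : PowerSeries ℂ) * (u : PowerSeries ℂ)) * geo d := by ring
      _ = geo d := by rw [show (((u⁻¹ : (PowerSeries ℂ)ˣ) : PowerSeries ℂ) * (u : PowerSeries ℂ)) = 1 from by exact_mod_cast u.inv_mul, one_mul]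
  have hder : PowerSeries.derivative ℂ (u : PowerSeries ℂ)
      = -((d : ℕ) • (PowerSeries.X : PowerSeries ℂ) ^ (d - 1)) := by
    rw [hu, map_sub]
    simp [Derivation.leibniz_pow]
  rw [lder, hder, hinv, ← geo2 d hd]
  have hx : (PowerSeries.X : PowerSeries ℂ) * PowerSeries.X ^ (d - 1) = PowerSeries.X ^ d := by
    rw [← pow_succ']
    congr 1
    omega
  rw [nsmul_eq_mul, smul_eq_C_mul, ← hx, map_natCast]
  ring

lemma term_eq (k d : ℕ) (hk : k ≠ 0) (bd : ℤ) :
    bd • (-((d : ℂ) • (if d ∣ k ∧ k ≠ 0 then (1:ℂ) else 0)))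
      = if d ∣ k then -((d : ℂ) * bd) else 0 := by
  by_cases h : d ∣ k <;> simp [h, hk, zsmul_eq_mul] <;> ring

/-- Let `n` be a positive integer and `b : ℕ → ℤ`.  In `ℂ⟦X⟧`, let
`P = ∏_{d ∣ n} (1 - X^d)^{b(d)}` (each factor being an integer power of the unit `1 - X^d`,
here given by units `u d` with `↑(u d) = 1 - X^d`).  Let `c(k) = ∑_{d ∣ gcd(k,n)} d·b(d)` for
`k ≥ 1` and `Q = ∑_{k ≥ 1} c(k)·X^k`.  Then `X·P′ = -Q·P`, where `P′` is the formal
derivative of `P`; equivalently `P = exp(-∑_{k ≥ 1} c(k)·X^k/k)`. -/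
theorem stmt_16 (n : ℕ) (hn : 0 < n) (b : ℕ → ℤ)
    (u : ℕ → (PowerSeries ℂ)ˣ)
    (hu : ∀ d ∈ n.divisors, ((u d : PowerSeries ℂ)) = 1 - (PowerSeries.X : PowerSeries ℂ) ^ d)
    (P : PowerSeries ℂ)
    (hP : P = ∏ d ∈ n.divisors, ((u d ^ b d : (PowerSeries ℂ)ˣ) : PowerSeries ℂ))
    (c : ℕ → ℂ)
    (hc : ∀ k : ℕ, 0 < k → c k = ∑ d ∈ (Nat.gcd k n).divisors, (d : ℂ) * (b d : ℂ))
    (Q : PowerSeries ℂ)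
    (hQ : Q = PowerSeries.mk fun k => if k = 0 then 0 else c k) :
    PowerSeries.X * (PowerSeries.derivative ℂ P) = -Q * P := by
  set U : (PowerSeries ℂ)ˣ := ∏ d ∈ n.divisors, u d ^ b d with hUdef
  have hUP : P = (U : PowerSeries ℂ) := by
    rw [hP, hUdef]; exact (map_prod (Units.coeHom (PowerSeries ℂ)) _ _).symm
  have key : PowerSeries.X * PowerSeries.derivative ℂ P = lder U * P := by
    rw [hUP, lder]
    have hinv : ((U⁻¹ : (PowerSeries ℂ)ˣ) : PowerSeries ℂ) * (U : PowerSeries ℂ) = 1 := by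
      exact_mod_cast U.inv_mul
    linear_combination (-(PowerSeries.X * PowerSeries.derivative ℂ (U : PowerSeries ℂ))) * hinv
  suffices h : lder U = -Q by rw [key, h]
  have h1 : lder U = ∑ d ∈ n.divisors, (b d) • lder (u d) := by
    rw [hUdef, lder_prod]
    exact Finset.sum_congr rfl fun d _ => lder_zpow _ _
  have h3 : lder U = ∑ d ∈ n.divisors,
      (b d) • -((d : ℂ) • PowerSeries.mk fun k => if d ∣ k ∧ k ≠ 0 then (1:ℂ) else 0) := by
    rw [h1]
    exact Finset.sum_congr rfl fun d hd =>
      by rw [lder_unit d (Nat.pos_of_mem_divisors hd) (u d) (hu d hd)]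
  rw [h3]
  ext k
  rw [map_sum, map_neg, hQ, coeff_mk]
  by_cases hk : k = 0
  · subst hk
    rw [if_pos rfl, neg_zero]
    refine Finset.sum_eq_zero fun d hd => ?_
    rw [map_zsmul, map_neg, LinearMap.map_smul, coeff_mk]
    simp
  · rw [if_neg hk]
    have hterm : ∀ d ∈ n.divisors,
        (PowerSeries.coeff k) ((b d) • -((d : ℂ) • PowerSeries.mk fun j => if d ∣ j ∧ j ≠ 0 then (1:ℂ) else 0))
          = if d ∣ k then -((d : ℂ) * (b d : ℂ)) else 0 := by
      intro d _
      rw [map_zsmul, map_neg, LinearMap.map_smul, coeff_mk, smul_eq_mul]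
      exact term_eq k d hk (b d)
    rw [Finset.sum_congr rfl hterm, ← Finset.sum_filter]
    have hset : n.divisors.filter (· ∣ k) = (Nat.gcd k n).divisors := by
      ext d
      rw [Finset.mem_filter, Nat.mem_divisors, Nat.mem_divisors, Nat.dvd_gcd_iff]
      have hg : Nat.gcd k n ≠ 0 := fun h => hn.ne' (Nat.eq_zero_of_gcd_eq_zero_right h)
      have hn2 : n ≠ 0 := hn.ne'
      tauto
    rw [hset, hc k (Nat.pos_of_ne_zero hk)]
    rw [← Finset.sum_neg_distrib]
end
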